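/- Let a, b ∈ ℂ with |a| = |b| = 1, Im(a) > 0, Im(b) > 0 and a ≠ b. Set u = (1 + a·b)/(a + b) (a real number with |u| < 1), t = |a − b| / |a·b − 1|, and T = ((1 + √(1 − u²)) · t · √(1 − t²)) / √(1 − u²·t²). Then v(a,b) = arcsin(T) if 1 ≥ (1 + √(1 − u²))·t², and v(a,b) = π − arcsin(T) if 1 < (1 + √(1 − u²))·t². -/

import Mathlib

open Complex ComplexConjugate

/-- The visual angle metric of the upper half plane:
`v(a,b) = sup {∠(a,x,b) : x ∈ ℝ}`, where the angle at the real vertex `x`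
is `|arg((a−x)/(b−x))|`. -/
noncomputable def vAngle (a b : ℂ) : ℝ :=
  ⨆ x : ℝ, |((a - (x : ℂ)) / (b - (x : ℂ))).arg|

private lemma my_sq_eq {x y : ℝ} (hx : 0 ≤ x) (hy : 0 ≤ y) (h : x ^ 2 = y ^ 2) : x = y := by
  have h2 : (x - y) * (x + y) = 0 := by linear_combination h
  rcases mul_eq_zero.1 h2 with h3 | h3
  · linarith
  · have hx0 : x = 0 := by linarith
    have hy0 : y = 0 := by linarith
    rw [hx0, hy0]


private lemma aux_pos_of_mul {A B N : ℝ} (h : A * N = B) (hA : 0 < A) (hB : 0 < B) : 0 < N := by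
  nlinarith

private lemma aux_gc {cc gg ff : ℝ} (hf2 : ff ^ 2 = cc ^ 2 - gg ^ 2) (hffne : ff ≠ 0)
    (hg0 : 0 < gg) (hc0 : 0 < cc) : gg < cc := by
  have hff2 : 0 < ff ^ 2 := lt_of_le_of_ne (sq_nonneg ff) (Ne.symm (pow_ne_zero 2 hffne))
  nlinarith [hff2]

private lemma aux_q1 {cc gg mm : ℝ} (hc0 : 0 < cc) (hg0 : 0 < gg) (hm0 : 0 < mm) :
    (cc * gg - mm ^ 2) * (cc - gg) ≤ (cc * gg + mm ^ 2) * (cc + gg) := by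
  nlinarith [mul_pos hc0 (mul_pos hg0 hg0), mul_pos hc0 (mul_pos hm0 hm0)]

private lemma aux_u2 {u cc ff gg : ℝ} (hucf : u * cc = ff) (hf2 : ff ^ 2 = cc ^ 2 - gg ^ 2)
    (hc0 : 0 < cc) (hg0 : 0 < gg) : u ^ 2 < 1 := by
  have h1 : u ^ 2 * cc ^ 2 = cc ^ 2 - gg ^ 2 := by
    linear_combination (u * cc + ff) * hucf + hf2
  nlinarith [h1, mul_pos hc0 hc0, mul_pos hg0 hg0]

private lemma aux_t1 {t hh mm gg : ℝ} (htm : t ^ 2 * hh ^ 2 = mm ^ 2)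
    (hmg : mm ^ 2 = hh ^ 2 - gg ^ 2) (hh0 : 0 < hh) (hg0 : 0 < gg) : t ^ 2 < 1 := by
  nlinarith [mul_pos hg0 hg0, mul_pos hh0 hh0]

private lemma aux_ut1 {u t : ℝ} (hu2 : u ^ 2 < 1) (ht1 : t ^ 2 < 1) :
    (0:ℝ) ≤ 1 - u ^ 2 * t ^ 2 := by
  nlinarith [sq_nonneg u, sq_nonneg t, sq_nonneg (u * t)]

private lemma aux_sgn_nonneg {X Y Z W : ℝ} (h : X * Y = Z * W) (hX : 0 ≤ X) (hY : 0 < Y)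
    (hZ : 0 < Z) : 0 ≤ W := by nlinarith

private lemma aux_sgn_neg {X Y Z W : ℝ} (h : X * Y = Z * W) (hX : X < 0) (hY : 0 < Y)
    (hZ : 0 < Z) : W < 0 := by nlinarith

private lemma aux_nonneg_of_mul {K A B : ℝ} (h : K * A = B) (hA : 0 < A) (hB : 0 ≤ B) :
    0 ≤ K := by nlinarith

private lemma aux_nonpos_of_mul {K A B : ℝ} (h : K * A = B) (hA : 0 < A) (hB : B < 0) :
    K ≤ 0 := by nlinarith

private lemma abs_arg_eq_aux (z : ℂ) (hz : z.im ≠ 0) :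
    |z.arg| = Real.pi / 2 - Real.arctan (z.re / |z.im|) := by
  have hz0 : z ≠ 0 := fun h => hz (by simp [h])
  have habs : (0:ℝ) < ‖z‖ := norm_pos_iff.mpr hz0
  have hcos : Real.cos z.arg = z.re / ‖z‖ := Complex.cos_arg hz0
  have hsin : Real.sin z.arg = z.im / ‖z‖ := Complex.sin_arg z
  rcases hz.lt_or_gt with him | him
  · have h1 : z.arg < 0 := Complex.arg_neg_iff.2 him
    have h2 : -Real.pi < z.arg := Complex.neg_pi_lt_arg z
    have habsim : |z.im| = -z.im := abs_of_neg him
    have htan : Real.tan (Real.pi/2 + z.arg) = z.re / |z.im| := by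
      rw [Real.tan_eq_sin_div_cos, Real.sin_add, Real.cos_add, hcos, hsin, habsim]
      simp only [Real.sin_pi_div_two, Real.cos_pi_div_two]
      field_simp
      rw [div_eq_iff (by simp [hz])]; ring
    have harc : Real.arctan (z.re / |z.im|) = Real.pi/2 + z.arg := by
      rw [← htan]
      exact Real.arctan_tan (by linarith) (by linarith)
    rw [harc, abs_of_neg h1]; ring
  · have h1 : 0 < z.arg := by
      rcases (Complex.arg_nonneg_iff.2 him.le).lt_or_eq with h | h
      · exact h
      · exact absurd (Complex.arg_eq_zero_iff.1 h.symm).2 him.ne'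
    have h2 : z.arg < Real.pi := Complex.arg_lt_pi_iff.2 (Or.inr hz)
    have habsim : |z.im| = z.im := abs_of_pos him
    have htan : Real.tan (Real.pi/2 - z.arg) = z.re / |z.im| := by
      rw [Real.tan_eq_sin_div_cos, Real.sin_pi_div_two_sub, Real.cos_pi_div_two_sub, hcos, hsin,
        habsim]
      field_simp
    have harc : Real.arctan (z.re / |z.im|) = Real.pi/2 - z.arg := by
      rw [← htan]
      exact Real.arctan_tan (by linarith) (by linarith)
    rw [harc, abs_of_pos h1]; ring

set_option maxHeartbeats 2000000 in
theorem vAngle_eq_arcsin (a b : ℂ)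
    (ha : ‖a‖ = 1) (hb : ‖b‖ = 1)
    (hia : 0 < a.im) (hib : 0 < b.im) (hab : a ≠ b)
    (u : ℝ) (hu : (u : ℂ) = (1 + a * b) / (a + b))
    (t T : ℝ) (ht : t = ‖a - b‖ / ‖a * b - 1‖)
    (hT : T = ((1 + Real.sqrt (1 - u ^ 2)) * t * Real.sqrt (1 - t ^ 2)) /
        Real.sqrt (1 - u ^ 2 * t ^ 2)) :
    |u| < 1 ∧
    (1 ≥ (1 + Real.sqrt (1 - u ^ 2)) * t ^ 2 → vAngle a b = Real.arcsin T) ∧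
    (1 < (1 + Real.sqrt (1 - u ^ 2)) * t ^ 2 → vAngle a b = Real.pi - Real.arcsin T) := by
  set p := a.re with hp
  set q := a.im with hq'
  set r := b.re with hr
  set s := b.im with hs'
  have hq : 0 < q := hia
  have hs : 0 < s := hib
  have hpq : p ^ 2 + q ^ 2 = 1 := by
    have h1 : Complex.normSq a = 1 := by rw [Complex.normSq_eq_norm_sq, ha]; norm_num
    rw [Complex.normSq_apply] at h1; linear_combination h1
  have hrs : r ^ 2 + s ^ 2 = 1 := by
    have h1 : Complex.normSq b = 1 := by rw [Complex.normSq_eq_norm_sq, hb]; norm_num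
    rw [Complex.normSq_apply] at h1; linear_combination h1
  set E := ‖a + b‖ with hE
  set D := ‖a - b‖ with hD
  set F := ‖a * b - 1‖ with hF
  have hE2 : E ^ 2 = (p + r) ^ 2 + (q + s) ^ 2 := by
    rw [hE, Complex.sq_norm, Complex.normSq_apply]
    simp [Complex.add_re, Complex.add_im]; ring
  have hD2 : D ^ 2 = (p - r) ^ 2 + (q - s) ^ 2 := by
    rw [hD, Complex.sq_norm, Complex.normSq_apply]
    simp [Complex.sub_re, Complex.sub_im]; ring
  have hF2 : F ^ 2 = (p * r - q * s - 1) ^ 2 + (p * s + q * r) ^ 2 := by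
    rw [hF, Complex.sq_norm, Complex.normSq_apply]
    simp [Complex.sub_re, Complex.sub_im, Complex.mul_re, Complex.mul_im]; ring
  have hab0 : a + b ≠ 0 := by
    intro h
    have : (a + b).im = 0 := by rw [h]; simp
    simp only [Complex.add_im] at this
    linarith
  have hE0 : 0 < E := norm_pos_iff.mpr hab0
  have hD0 : 0 < D := norm_pos_iff.mpr (sub_ne_zero.2 hab)
  -- the normalized variables
  set cc := E / 2 with hcc
  set ff := (p + r) / E with hff
  set hh := (q + s) / E with hhh
  set mm := D / 2 with hmm
  set gg := Real.sqrt (q * s) with hgg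
  have hc0 : 0 < cc := by positivity
  have hm0 : 0 < mm := by positivity
  have hh0 : 0 < hh := by rw [hhh]; positivity
  have hg0 : 0 < gg := Real.sqrt_pos.2 (by positivity)
  have hg2 : gg ^ 2 = q * s := Real.sq_sqrt (by positivity)
  have hcm : cc ^ 2 + mm ^ 2 = 1 := by
    rw [hcc, hmm]
    field_simp
    linear_combination hE2 + hD2 + 2 * hpq + 2 * hrs
  have hfh : ff ^ 2 + hh ^ 2 = 1 := by
    rw [hff, hhh]
    field_simp
    linear_combination hE2.symm
  have hf2 : ff ^ 2 = cc ^ 2 - gg ^ 2 := by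
    rw [hff, hcc, hg2]
    field_simp
    linear_combination (2 - E^2 - 4*r^2 + 2*q*s - 2*p*r) * hpq +
      (-2 - E^2 + 2*q*s + 4*q^2 - 2*p*r) * hrs + (-2 - E^2 + 2*q*s - 2*p*r) * hE2
  have hm2 : mm ^ 2 = 1 - cc ^ 2 := by linear_combination hcm
  have hh2 : hh ^ 2 = 1 - cc ^ 2 + gg ^ 2 := by linear_combination hfh - hf2
  set sd := E * (r - p) / (2 * (q + s)) with hsd
  have hqs0 : (0:ℝ) < q + s := by linarith
  have hsd1 : q - s = 2 * ff * sd := by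
    rw [hff, hsd]
    field_simp
    linear_combination hpq - hrs
  have hsd2 : q * r - p * s = 2 * cc * sd := by
    rw [hcc, hsd]
    field_simp
    linear_combination (r + p) * hpq + (-r - p) * hrs + (-r + p) * hE2
  have hsde : sd * (2 * (q + s)) = E * (r - p) := by
    rw [hsd]; field_simp
  have hEDrp : E ^ 2 * (r - p) ^ 2 = D ^ 2 * (q + s) ^ 2 := by
    linear_combination (2 + E^2 - 2*s^2 - 4*r^2 - 2*q*s - 2*q^2 - 2*p*r) * hpq +
      (-2 + E^2 - 2*s^2 - 2*q*s + 2*q^2 - 2*p*r) * hrs + (2 - s^2 - q^2 - 2*p*r) * hE2 +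
      (-s^2 - 2*q*s - q^2) * hD2
  have hsd3 : sd ^ 2 = mm ^ 2 := by
    have h2 : sd ^ 2 * (4 * (q + s) ^ 2) = mm ^ 2 * (4 * (q + s) ^ 2) := by
      have e1 : sd ^ 2 * (4 * (q + s) ^ 2) = (sd * (2 * (q + s))) ^ 2 := by ring
      have e2 : mm ^ 2 * (4 * (q + s) ^ 2) = D ^ 2 * (q + s) ^ 2 := by rw [hmm]; ring
      rw [e1, hsde, e2]
      linear_combination hEDrp
    exact mul_right_cancel₀ (by positivity) h2
  have habs_sd : |sd| = mm := by
    have h2 : (sd - mm) * (sd + mm) = 0 := by linear_combination hsd3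
    rcases mul_eq_zero.1 h2 with h3 | h3
    · rw [_root_.abs_of_pos (by linarith : 0 < sd)]; linarith
    · rw [_root_.abs_of_neg (by linarith : sd < 0)]; linarith
  have hfc : 2 * ff * cc = p + r := by rw [hff, hcc]; field_simp
  have hm2' : 1 - 2 * mm ^ 2 = p * r + q * s := by
    rw [hmm]; field_simp; linear_combination -hD2 - hpq - hrs
  have hNx : ∀ x : ℝ, (p - x) * (r - x) + q * s = x ^ 2 - 2 * ff * cc * x + 1 - 2 * mm ^ 2 := by
    intro x
    linear_combination x * hfc - hm2'
  have hSx : ∀ x : ℝ, q * (r - x) - (p - x) * s = 2 * sd * (cc - ff * x) := by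
    intro x
    linear_combination hsd2 - x * hsd1
  -- relations with u and t
  have hu' : (u : ℂ) * (a + b) = 1 + a * b := by
    rw [hu, div_mul_cancel₀ _ hab0]
  have hA1 : u * (p + r) = 1 + p * r - q * s := by
    have h := congrArg Complex.re hu'
    simp [Complex.mul_re, Complex.add_re, Complex.add_im, Complex.mul_im] at h
    linear_combination h
  have hA2 : u * (q + s) = p * s + q * r := by
    have h := congrArg Complex.im hu'
    simp [Complex.mul_re, Complex.add_re, Complex.add_im, Complex.mul_im] at h
    linear_combination h
  have huE : u * E ^ 2 = 2 * (p + r) := by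
    linear_combination (p + r) * hA1 + (q + s) * hA2 + r * hpq + p * hrs + u * hE2
  have hucf : u * cc = ff := by
    rw [hcc, hff]
    field_simp
    linear_combination huE
  have hu2 : u ^ 2 < 1 := aux_u2 hucf hf2 hc0 hg0
  have huabs : |u| < 1 := by
    rw [← sq_lt_one_iff_abs_lt_one]
    exact hu2
  have hFE : F * E = 2 * (q + s) := by
    refine my_sq_eq (by positivity) (by positivity) ?_
    have : (F * E) ^ 2 = F ^ 2 * E ^ 2 := by ring
    rw [this, hF2, hE2]
    linear_combination (1 + s^2 + s^4 - 3*r^2 + 2*r^2*s^2 + r^4 + 2*q*s + 2*q*s^3 + 2*q*r^2*s +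
      q^2*s^2 + q^2*r^2 - 2*p*r + 2*p*r*s^2 + 2*p*r^3 + p^2*s^2 + p^2*r^2) * hpq +
      (-1 + s^2 + r^2 + 4*q*s + 4*q^2) * hrs
  have hF0 : 0 < F := by
    rcases (norm_nonneg (a * b - 1)).lt_or_eq with h0 | h0
    · exact h0
    · rw [hF, ← h0, zero_mul] at hFE
      linarith
  have hth : t * hh = mm := by
    rw [ht, hhh, hmm]
    field_simp
    linear_combination -hFE
  have htm : t ^ 2 * hh ^ 2 = mm ^ 2 := by linear_combination (t * hh + mm) * hth
  have ht0 : 0 < t := by rw [ht]; exact div_pos hD0 hF0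
  have hmg : mm ^ 2 = hh ^ 2 - gg ^ 2 := by linear_combination hm2 - hh2
  have ht1 : t ^ 2 < 1 := aux_t1 htm hmg hh0 hg0
  have hw : Real.sqrt (1 - u ^ 2) * cc = gg := by
    refine my_sq_eq (by positivity) hg0.le ?_
    rw [mul_pow, Real.sq_sqrt (by linarith [hu2] : (0:ℝ) ≤ 1 - u ^ 2)]
    linear_combination (-1) * hf2 - (u * cc + ff) * hucf
  have hw1 : Real.sqrt (1 - t ^ 2) * hh = gg := by
    refine my_sq_eq (by positivity) hg0.le ?_
    rw [mul_pow, Real.sq_sqrt (by linarith [ht1] : (0:ℝ) ≤ 1 - t ^ 2)]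
    linear_combination hh2 - hm2 - htm
  have hutm : u * cc * (t * hh) = ff * mm := by rw [hucf, hth]
  have hut1 : (0:ℝ) ≤ 1 - u ^ 2 * t ^ 2 := aux_ut1 hu2 ht1
  have hw2 : Real.sqrt (1 - u ^ 2 * t ^ 2) * (cc * hh) = gg := by
    refine my_sq_eq (by positivity) hg0.le ?_
    rw [mul_pow, Real.sq_sqrt hut1]
    linear_combination (-mm^2) * hf2 + (gg^2 - cc^2) * hm2 + cc^2 * hh2 -
      (u * cc * t * hh + ff * mm) * hutm
  set K := (cc * gg - mm ^ 2) / (mm * (cc + gg)) with hK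
  have hcg0 : 0 < cc + gg := by linarith
  have hKe : K * (mm * (cc + gg)) = cc * gg - mm ^ 2 := by
    rw [hK]; field_simp
  set V := Real.pi / 2 - Real.arctan K with hV
  clear_value cc ff hh mm gg sd K V
  -- core inequality: for all x, K * |S x| ≤ N x
  have hcore : ∀ x : ℝ, K * |q * (r - x) - (p - x) * s| ≤ (p - x) * (r - x) + q * s := by
    intro x
    rw [hSx x, hNx x, _root_.abs_mul, _root_.abs_mul, habs_sd, _root_.abs_two]
    rcases le_or_gt 0 (cc - ff * x) with hcf | hcf
    · rw [_root_.abs_of_nonneg hcf]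
      have hA : (x ^ 2 - 2 * ff * cc * x + 1 - 2 * mm ^ 2) * (cc + gg) ^ 2 =
          ((cc + gg) * x - ff) ^ 2 + 2 * (cc * gg - mm ^ 2) * (cc - ff * x) * (cc + gg) := by
        linear_combination (-1) * hf2 + (-2*gg^2 - 2*cc*gg - 2*x*ff*gg - 2*x*cc*ff) * hm2
      have e2 : K * (2 * mm * (cc - ff * x)) * (cc + gg) ^ 2 =
          2 * (cc * gg - mm ^ 2) * (cc - ff * x) * (cc + gg) := by
        linear_combination 2 * (cc - ff * x) * (cc + gg) * hKe
      have e3 : K * (2 * mm * (cc - ff * x)) * (cc + gg) ^ 2 ≤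
          (x ^ 2 - 2 * ff * cc * x + 1 - 2 * mm ^ 2) * (cc + gg) ^ 2 := by
        rw [e2, hA]
        linarith [sq_nonneg ((cc + gg) * x - ff)]
      exact (mul_le_mul_iff_of_pos_right (pow_pos hcg0 2)).1 e3
    · rw [_root_.abs_of_neg hcf]
      have hffne : ff ≠ 0 := by
        intro h0
        rw [h0] at hcf
        simp at hcf
        linarith
      have hgc : gg < cc := aux_gc hf2 hffne hg0 hc0
      have hcg2 : 0 < cc - gg := by linarith
      have hB : (x ^ 2 - 2 * ff * cc * x + 1 - 2 * mm ^ 2) * (cc - gg) ^ 2 =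
          ((cc - gg) * x - ff) ^ 2 - 2 * (cc * gg + mm ^ 2) * (cc - ff * x) * (cc - gg) := by
        linear_combination (-1) * hf2 + (-2*gg^2 + 2*cc*gg + 2*x*ff*gg - 2*x*cc*ff) * hm2
      have e5 : K * mm * (cc - gg) ≤ cc * gg + mm ^ 2 := by
        have q1 : (cc * gg - mm ^ 2) * (cc - gg) ≤ (cc * gg + mm ^ 2) * (cc + gg) :=
          aux_q1 hc0 hg0 hm0
        have q2 : (K * mm * (cc - gg)) * (cc + gg) = (cc * gg - mm ^ 2) * (cc - gg) := by
          linear_combination (cc - gg) * hKe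
        have q3 : (K * mm * (cc - gg)) * (cc + gg) ≤ (cc * gg + mm ^ 2) * (cc + gg) := by
          rw [q2]; exact q1
        exact (mul_le_mul_iff_of_pos_right hcg0).1 q3
      have h7 : 0 ≤ ff * x - cc := by linarith
      have e7 : K * (2 * mm * -(cc - ff * x)) * (cc - gg) ^ 2 =
          (2 * (ff * x - cc) * (cc - gg)) * (K * mm * (cc - gg)) := by ring
      have e8 : (2 * (ff * x - cc) * (cc - gg)) * (K * mm * (cc - gg)) ≤
          (2 * (ff * x - cc) * (cc - gg)) * (cc * gg + mm ^ 2) :=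
        mul_le_mul_of_nonneg_left e5 (mul_nonneg (mul_nonneg (by norm_num) h7) hcg2.le)
      have e9 : (2 * (ff * x - cc) * (cc - gg)) * (cc * gg + mm ^ 2) ≤
          (x ^ 2 - 2 * ff * cc * x + 1 - 2 * mm ^ 2) * (cc - gg) ^ 2 := by
        linarith [sq_nonneg ((cc - gg) * x - ff), hB]
      have e10 : K * (2 * mm * -(cc - ff * x)) * (cc - gg) ^ 2 ≤
          (x ^ 2 - 2 * ff * cc * x + 1 - 2 * mm ^ 2) * (cc - gg) ^ 2 := by
        rw [e7]; linarith
      exact (mul_le_mul_iff_of_pos_right (pow_pos hcg2 2)).1 e10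
  -- pointwise bound
  have hVpos : 0 < V := by
    rw [hV]
    have := Real.arctan_lt_pi_div_two K
    linarith
  have key : ∀ x : ℝ, |((a - (x : ℂ)) / (b - (x : ℂ))).arg| ≤ V := by
    intro x
    have hbx : b - (x : ℂ) ≠ 0 := by
      intro h0
      have : (b - (x : ℂ)).im = 0 := by rw [h0]; simp
      simp only [Complex.sub_im, Complex.ofReal_im, sub_zero] at this
      exact hs.ne' this
    have hnb : 0 < Complex.normSq (b - (x : ℂ)) := Complex.normSq_pos.2 hbx
    have hre : ((a - (x : ℂ)) / (b - (x : ℂ))).re =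
        ((p - x) * (r - x) + q * s) / Complex.normSq (b - (x : ℂ)) := by
      rw [Complex.div_re]
      simp only [Complex.sub_re, Complex.sub_im, Complex.ofReal_re, Complex.ofReal_im, sub_zero]
      rw [← add_div]
    have him : ((a - (x : ℂ)) / (b - (x : ℂ))).im =
        (q * (r - x) - (p - x) * s) / Complex.normSq (b - (x : ℂ)) := by
      rw [Complex.div_im]
      simp only [Complex.sub_re, Complex.sub_im, Complex.ofReal_re, Complex.ofReal_im, sub_zero]
      rw [div_sub_div_same]
    by_cases hS0 : q * (r - x) - (p - x) * s = 0
    · have hzim : ((a - (x : ℂ)) / (b - (x : ℂ))).im = 0 := by rw [him, hS0, zero_div]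
      have hNpos : 0 < (p - x) * (r - x) + q * s := by
        have key2 : q * s * ((p - x) * (r - x) + q * s) = (s * (p - x)) ^ 2 + (q * s) ^ 2 := by
          linear_combination (s * (p - x)) * hS0
        exact aux_pos_of_mul key2 (mul_pos hq hs)
          (add_pos_of_nonneg_of_pos (sq_nonneg _) (pow_pos (mul_pos hq hs) 2))
      have hzre : 0 < ((a - (x : ℂ)) / (b - (x : ℂ))).re := by
        rw [hre]; exact div_pos hNpos hnb
      have harg0 : ((a - (x : ℂ)) / (b - (x : ℂ))).arg = 0 :=
        Complex.arg_eq_zero_iff.2 ⟨hzre.le, hzim⟩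
      rw [harg0, _root_.abs_zero]
      exact hVpos.le
    · have hzim : ((a - (x : ℂ)) / (b - (x : ℂ))).im ≠ 0 := by
        rw [him]; exact div_ne_zero hS0 hnb.ne'
      rw [abs_arg_eq_aux _ hzim, hV]
      have hratio : ((a - (x : ℂ)) / (b - (x : ℂ))).re / |((a - (x : ℂ)) / (b - (x : ℂ))).im| =
          ((p - x) * (r - x) + q * s) / |q * (r - x) - (p - x) * s| := by
        rw [hre, him, _root_.abs_div, _root_.abs_of_pos hnb]
        rw [div_div_div_cancel_right₀ hnb.ne']
      rw [hratio]
      have hKle : K ≤ ((p - x) * (r - x) + q * s) / |q * (r - x) - (p - x) * s| := by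
        rw [le_div_iff₀ (_root_.abs_pos.2 hS0)]
        exact hcore x
      have := Real.arctan_strictMono.monotone hKle
      linarith
  -- attainment at x₀
  set x₀ := ff / (cc + gg) with hx₀
  have hcfx0 : cc - ff * x₀ = gg := by
    rw [hx₀]
    field_simp [hcg0.ne']
    linear_combination (-1) * hf2
  have hattain : |((a - (x₀ : ℂ)) / (b - (x₀ : ℂ))).arg| = V := by
    have hbx : b - (x₀ : ℂ) ≠ 0 := by
      intro h0
      have : (b - (x₀ : ℂ)).im = 0 := by rw [h0]; simp
      simp only [Complex.sub_im, Complex.ofReal_im, sub_zero] at this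
      exact hs.ne' this
    have hnb : 0 < Complex.normSq (b - (x₀ : ℂ)) := Complex.normSq_pos.2 hbx
    have hre : ((a - (x₀ : ℂ)) / (b - (x₀ : ℂ))).re =
        ((p - x₀) * (r - x₀) + q * s) / Complex.normSq (b - (x₀ : ℂ)) := by
      rw [Complex.div_re]
      simp only [Complex.sub_re, Complex.sub_im, Complex.ofReal_re, Complex.ofReal_im, sub_zero]
      rw [← add_div]
    have him : ((a - (x₀ : ℂ)) / (b - (x₀ : ℂ))).im =
        (q * (r - x₀) - (p - x₀) * s) / Complex.normSq (b - (x₀ : ℂ)) := by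
      rw [Complex.div_im]
      simp only [Complex.sub_re, Complex.sub_im, Complex.ofReal_re, Complex.ofReal_im, sub_zero]
      rw [div_sub_div_same]
    have hSv : q * (r - x₀) - (p - x₀) * s = 2 * sd * gg := by
      rw [hSx x₀, hcfx0]
    have hsdne : sd ≠ 0 := by
      intro h0
      rw [h0] at hsd3
      simp at hsd3
      exact absurd hsd3.symm (pow_pos hm0 2).ne'
    have hS0 : q * (r - x₀) - (p - x₀) * s ≠ 0 := by
      rw [hSv]
      exact mul_ne_zero (mul_ne_zero two_ne_zero hsdne) hg0.ne'
    have hzim : ((a - (x₀ : ℂ)) / (b - (x₀ : ℂ))).im ≠ 0 := by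
      rw [him]; exact div_ne_zero hS0 hnb.ne'
    rw [abs_arg_eq_aux _ hzim, hV]
    have hratio : ((a - (x₀ : ℂ)) / (b - (x₀ : ℂ))).re / |((a - (x₀ : ℂ)) / (b - (x₀ : ℂ))).im| =
        ((p - x₀) * (r - x₀) + q * s) / |q * (r - x₀) - (p - x₀) * s| := by
      rw [hre, him, _root_.abs_div, _root_.abs_of_pos hnb]
      rw [div_div_div_cancel_right₀ hnb.ne']
    rw [hratio]
    have habsS : |q * (r - x₀) - (p - x₀) * s| = 2 * mm * gg := by
      rw [hSv, _root_.abs_mul, _root_.abs_mul, habs_sd, _root_.abs_of_pos hg0, _root_.abs_two]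
    have hNv : (p - x₀) * (r - x₀) + q * s = K * (2 * mm * gg) := by
      rw [hNx x₀]
      have hA0 : (x₀ ^ 2 - 2 * ff * cc * x₀ + 1 - 2 * mm ^ 2) * (cc + gg) ^ 2 =
          ((cc + gg) * x₀ - ff) ^ 2 + 2 * (cc * gg - mm ^ 2) * (cc - ff * x₀) * (cc + gg) := by
        linear_combination (-1) * hf2 + (-2*gg^2 - 2*cc*gg - 2*x₀*ff*gg - 2*x₀*cc*ff) * hm2
      have hx0e : (cc + gg) * x₀ - ff = 0 := by
        rw [hx₀]; field_simp [hcg0.ne']; ring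
      rw [hx0e, hcfx0] at hA0
      have q4 : K * (2 * mm * gg) * (cc + gg) ^ 2 = 2 * (cc * gg - mm ^ 2) * gg * (cc + gg) := by
        linear_combination 2 * gg * (cc + gg) * hKe
      have q5 : (x₀ ^ 2 - 2 * ff * cc * x₀ + 1 - 2 * mm ^ 2) * (cc + gg) ^ 2 =
          K * (2 * mm * gg) * (cc + gg) ^ 2 := by
        rw [q4, hA0]; ring
      exact mul_right_cancel₀ (pow_pos hcg0 2).ne' q5
    rw [hNv, habsS]
    rw [mul_div_assoc]
    rw [div_self (mul_pos (mul_pos two_pos hm0) hg0).ne', mul_one]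
  -- the supremum
  have hbdd : BddAbove (Set.range fun x : ℝ => |((a - (x : ℂ)) / (b - (x : ℂ))).arg|) := by
    refine ⟨V, ?_⟩
    rintro y ⟨x, rfl⟩
    exact key x
  have hVA : vAngle a b = V := by
    rw [vAngle]
    refine le_antisymm (ciSup_le key) ?_
    rw [← hattain]
    exact le_ciSup hbdd x₀
  have hTv : T = mm * (cc + gg) / hh := by
    rw [hT]
    rw [show (1:ℝ) + Real.sqrt (1 - u ^ 2) = (cc + gg) / cc from by
      rw [eq_div_iff hc0.ne']; linear_combination hw]
    rw [show Real.sqrt (1 - t ^ 2) = gg / hh from by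
      rw [eq_div_iff hh0.ne']; linear_combination hw1]
    rw [show Real.sqrt (1 - u ^ 2 * t ^ 2) = gg / (cc * hh) from by
      rw [eq_div_iff (mul_pos hc0 hh0).ne']; linear_combination hw2]
    rw [show t = mm / hh from by rw [eq_div_iff hh0.ne']; linear_combination hth]
    field_simp
  have hsign : (1 - (1 + Real.sqrt (1 - u ^ 2)) * t ^ 2) * (cc ^ 2 * hh ^ 2) =
      cc * gg * (cc * gg - mm ^ 2) := by
    linear_combination (-(t ^ 2 * cc * hh ^ 2)) * hw + (-(cc ^ 2 + cc * gg)) * htm +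
      cc ^ 2 * hh2 - cc ^ 2 * hm2
  have hid : (1 + K ^ 2) * (mm * (cc + gg)) ^ 2 = hh ^ 2 := by
    linear_combination (K * mm * (cc + gg) + (cc * gg - mm ^ 2)) * hKe +
      (1 + mm ^ 2 + gg ^ 2) * hm2 - hh2
  have hsqrtK : Real.sqrt (1 + K ^ 2) = hh / (mm * (cc + gg)) := by
    refine my_sq_eq (Real.sqrt_nonneg _) (div_pos hh0 (mul_pos hm0 hcg0)).le ?_
    rw [Real.sq_sqrt (by positivity : (0:ℝ) ≤ 1 + K ^ 2), div_pow]
    rw [eq_div_iff (pow_ne_zero 2 (mul_pos hm0 hcg0).ne')]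
    linear_combination hid
  have hsinV : Real.sin V = mm * (cc + gg) / hh := by
    rw [hV, Real.sin_pi_div_two_sub, Real.cos_arctan, hsqrtK, one_div_div]
  have hTsin : T = Real.sin V := by rw [hTv, hsinV]
  refine ⟨huabs, ?_, ?_⟩
  · intro hcond
    have hsgn : 0 ≤ cc * gg - mm ^ 2 := by
      have h9 : 0 ≤ 1 - (1 + Real.sqrt (1 - u ^ 2)) * t ^ 2 := by linarith
      exact aux_sgn_nonneg hsign h9 (mul_pos (pow_pos hc0 2) (pow_pos hh0 2)) (mul_pos hc0 hg0)
    have hK0 : 0 ≤ K := aux_nonneg_of_mul hKe (mul_pos hm0 hcg0) hsgn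
    have harc1 : 0 ≤ Real.arctan K := by
      rw [← Real.arctan_zero]
      exact Real.arctan_strictMono.monotone hK0
    rw [hVA, hTsin]
    refine (Real.arcsin_sin ?_ ?_).symm
    · linarith [hVpos, Real.pi_pos]
    · rw [hV]; linarith
  · intro hcond
    have hsgn : cc * gg - mm ^ 2 < 0 := by
      have h9 : 1 - (1 + Real.sqrt (1 - u ^ 2)) * t ^ 2 < 0 := by linarith
      exact aux_sgn_neg hsign h9 (mul_pos (pow_pos hc0 2) (pow_pos hh0 2)) (mul_pos hc0 hg0)
    have hKneg : K ≤ 0 := aux_nonpos_of_mul hKe (mul_pos hm0 hcg0) hsgn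
    have harc2 : Real.arctan K ≤ 0 := by
      rw [← Real.arctan_zero]
      exact Real.arctan_strictMono.monotone hKneg
    rw [hVA, hTsin]
    have harcs : Real.arcsin (Real.sin V) = Real.pi - V := by
      rw [← Real.sin_pi_sub]
      refine Real.arcsin_sin ?_ ?_
      · rw [hV]; linarith [Real.neg_pi_div_two_lt_arctan K, Real.pi_pos]
      · rw [hV]; linarith
    rw [harcs]
    ring
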